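/- arXiv:1912.09984 — 2 statements merged into one kernel-verified Lean document; each statement's English description precedes it below -/
import Mathlib

section
/- Let C be an [n,k;n_1,…,n_ℓ] sum-rank metric code over (F;K_1,…,K_ℓ) and M_C = (K^n, ρ_C) the associated sum-matroid. Then for every i = 1,…,k, the i-th generalized weight of the sum-matroid equals the i-th generalized sum-rank weight of the code: d_i(M_C) = d_{SR,i}(C). -/
open Module

/-! Setup for sum-rank metric codes and sum-matroids.

We fix `ℓ` finite fields `K i` with a common extension `F` (given by algebra
structures), and block lengths `nv i`.  The ambient space `F^n` (with
`n = ∑ i, nv i`) is modelled as the dependent product of the blocks `F^{nv i}`,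
and an element of the product lattice `P(K^n)` is a tuple of `K i`-subspaces of
`K i ^ (nv i)`. -/

/-- The ambient space `F^n`, split into `ℓ` blocks of sizes `nv i`. -/
abbrev SRAmb (ℓ : ℕ) (nv : Fin ℓ → ℕ) (F : Type) : Type :=
  (i : Fin ℓ) → Fin (nv i) → F

/-- The product lattice `P(K^n)`: tuples `L` where `L i` is a `K i`-subspace of
`K i ^ (nv i)`. -/
abbrev SRLat (ℓ : ℕ) (nv : Fin ℓ → ℕ) (K : Fin ℓ → Type) [∀ i, Field (K i)] : Type :=
  (i : Fin ℓ) → Submodule (K i) (Fin (nv i) → K i)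

variable {ℓ : ℕ} {nv : Fin ℓ → ℕ} {F : Type} [Field F]
  {K : Fin ℓ → Type} [∀ i, Field (K i)] [∀ i, Algebra (K i) F]

/-- `Rk(L) = ∑ i, dim_{K i} (L i)`. -/
noncomputable def SRrk (L : SRLat ℓ nv K) : ℕ := ∑ i, finrank (K i) (L i)

/-- Orthogonal complement of a subspace of `k^m` with respect to the standard
dot product. -/
def SRorth {k : Type} [Field k] {m : ℕ} (W : Submodule k (Fin m → k)) :
    Submodule k (Fin m → k) where
  carrier := {v | ∀ w ∈ W, ∑ t, v t * w t = 0}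
  zero_mem' := by intro w hw; simp
  add_mem' := by
    intro a b ha hb w hw
    have h : ∑ t, (a + b) t * w t = (∑ t, a t * w t) + ∑ t, b t * w t := by
      simp [add_mul, Finset.sum_add_distrib]
    rw [h, ha w hw, hb w hw, add_zero]
  smul_mem' := by
    intro c a ha w hw
    have h : ∑ t, (c • a) t * w t = c * ∑ t, a t * w t := by
      simp [Finset.mul_sum, mul_assoc]
    rw [h, ha w hw, mul_zero]

/-- Componentwise orthogonal complement `L^⊥` in the lattice `P(K^n)`. -/
def SRlatPerp (L : SRLat ℓ nv K) : SRLat ℓ nv K := fun i => SRorth (L i)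

/-- The `i`-th component of the sum-rank support of `c ∈ F^n`: the `K i`-row
space of the coordinate matrix of the `i`-th block of `c` (described
basis-freely as the span of the images of the block of `c` under all
`K i`-linear functionals `F → K i`). -/
def SRsupp (c : SRAmb ℓ nv F) (i : Fin ℓ) : Submodule (K i) (Fin (nv i) → K i) :=
  Submodule.span (K i) {v | ∃ f : F →ₗ[K i] K i, v = fun t => f (c i t)}

/-- The sum-rank weight `srank(c) = Rk(supp(c))`. -/
noncomputable def SRwt (c : SRAmb ℓ nv F) : ℕ :=
  ∑ i, finrank (K i) (SRsupp (K := K) c i)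

/-- The sum-rank support space `V_L = {c ∈ F^n : supp(c) ⊆ L}`. -/
def SRVL (L : SRLat ℓ nv K) : Submodule F (SRAmb ℓ nv F) where
  carrier := {c | ∀ i, SRsupp (K := K) c i ≤ L i}
  zero_mem' := by
    intro i
    apply Submodule.span_le.mpr
    rintro v ⟨f, rfl⟩
    have h : (fun t => f ((0 : SRAmb ℓ nv F) i t)) = (0 : Fin (nv i) → K i) := by
      funext t; simp
    rw [h]
    exact (L i).zero_mem
  add_mem' := by
    intro a b ha hb i
    apply Submodule.span_le.mpr
    rintro v ⟨f, rfl⟩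
    have h : (fun t => f ((a + b) i t)) =
        (fun t => f (a i t)) + fun t => f (b i t) := by
      funext t; simp
    rw [h]
    exact (L i).add_mem (ha i (Submodule.subset_span ⟨f, rfl⟩))
      (hb i (Submodule.subset_span ⟨f, rfl⟩))
  smul_mem' := by
    intro x a ha i
    apply Submodule.span_le.mpr
    rintro v ⟨f, rfl⟩
    have h : (fun t => f ((x • a) i t)) =
        fun t => (f.comp (LinearMap.mulLeft (K i) x)) (a i t) := by
      funext t; simp [smul_eq_mul]
    rw [h]
    exact ha i (Submodule.subset_span ⟨_, rfl⟩)

/-- The dual code `C^⊥` with respect to the standard bilinear form on `F^n`. -/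
def SRdual (C : Submodule F (SRAmb ℓ nv F)) : Submodule F (SRAmb ℓ nv F) where
  carrier := {x | ∀ c ∈ C, ∑ i, ∑ t, x i t * c i t = 0}
  zero_mem' := by intro c hc; simp
  add_mem' := by
    intro a b ha hb c hc
    have h : ∑ i, ∑ t, (a + b) i t * c i t =
        (∑ i, ∑ t, a i t * c i t) + ∑ i, ∑ t, b i t * c i t := by
      simp [add_mul, Finset.sum_add_distrib]
    rw [h, ha c hc, hb c hc, add_zero]
  smul_mem' := by
    intro x a ha c hc
    have h : ∑ i, ∑ t, (x • a) i t * c i t = x * ∑ i, ∑ t, a i t * c i t := by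
      simp [Finset.mul_sum, mul_assoc]
    rw [h, ha c hc, mul_zero]

/-- `C(L) = {c ∈ C^⊥ : supp(c) ⊆ L^⊥} = C^⊥ ∩ V_{L^⊥}`. -/
def SRCL (C : Submodule F (SRAmb ℓ nv F)) (L : SRLat ℓ nv K) :
    Submodule F (SRAmb ℓ nv F) :=
  SRdual C ⊓ SRVL (SRlatPerp L)

/-- The projection `Π_L : F^n → F^{Rk L}`, `x ↦ x Aᵀ`, where
`A = diag(A_1, …, A_ℓ)` and `A_i` is the matrix whose rows are the chosen basis
of `L i` over `K i`.  The target `F^{Rk L}` is indexed blockwise. -/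
noncomputable def SRpi (L : SRLat ℓ nv K) :
    SRAmb ℓ nv F →ₗ[F] ((i : Fin ℓ) → Fin (finrank (K i) (L i)) → F) where
  toFun x := fun i j =>
    ∑ t, x i t * algebraMap (K i) F ((Module.finBasis (K i) (L i) j).val t)
  map_add' x y := by
    funext i j
    simp [add_mul, Finset.sum_add_distrib]
  map_smul' a x := by
    funext i j
    simp [Finset.mul_sum, mul_assoc]

/-- The rank function `ρ_C(L) = dim_F Π_L(C^⊥)` of the sum-matroid associated
to the code `C`. -/
noncomputable def SRrho (C : Submodule F (SRAmb ℓ nv F)) (L : SRLat ℓ nv K) : ℕ :=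
  finrank F (Submodule.map (SRpi (F := F) L) (SRdual C))

/-- Minimum sum-rank distance of a code. -/
noncomputable def SRminDist (K : Fin ℓ → Type) [∀ i, Field (K i)]
    [∀ i, Algebra (K i) F] (C : Submodule F (SRAmb ℓ nv F)) : ℕ :=
  sInf {w | ∃ c ∈ C, c ≠ 0 ∧ SRwt (K := K) c = w}

/-- The `r`-th generalized sum-rank weight
`d_{SR,r}(C) = min{Rk L : dim_F (C ∩ V_L) ≥ r}`. -/
noncomputable def SRdgw (K : Fin ℓ → Type) [∀ i, Field (K i)]
    [∀ i, Algebra (K i) F] (C : Submodule F (SRAmb ℓ nv F)) (r : ℕ) : ℕ :=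
  sInf {w | ∃ L : SRLat ℓ nv K, r ≤ finrank F ↥(C ⊓ SRVL L) ∧ SRrk L = w}

/-- The sum-matroid axioms (R1), (R2), (R3) for a function `ρ : P(K^n) → ℕ`. -/
def IsSumMatroid (ρ : SRLat ℓ nv K → ℕ) : Prop :=
  (∀ L, ρ L ≤ SRrk L) ∧
  (∀ L L' : SRLat ℓ nv K, L ≤ L' → ρ L ≤ ρ L') ∧
  (∀ L L' : SRLat ℓ nv K, ρ (L ⊔ L') + ρ (L ⊓ L') ≤ ρ L + ρ L')

/-- The dual rank function `ρ*(L) = ρ(L^⊥) + Rk L − ρ(K^n)`. -/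
noncomputable def SRdualRk (ρ : SRLat ℓ nv K → ℕ) (L : SRLat ℓ nv K) : ℕ :=
  ρ (SRlatPerp L) + SRrk L - ρ ⊤

/-- The nullity function `η(L) = Rk L − ρ(L)`. -/
noncomputable def SReta (ρ : SRLat ℓ nv K → ℕ) (L : SRLat ℓ nv K) : ℕ :=
  SRrk L - ρ L

/-- The `i`-th generalized weight of a sum-matroid,
`d_i(M) = min{Rk L : η(L) = i}`. -/
noncomputable def SRgw (ρ : SRLat ℓ nv K → ℕ) (i : ℕ) : ℕ :=
  sInf {w | ∃ L : SRLat ℓ nv K, SReta ρ L = i ∧ SRrk L = w}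

set_option linter.unusedSectionVars false
set_option linter.unusedVariables false
section Aux
open Module LinearMap

variable {ℓ : ℕ} {nv : Fin ℓ → ℕ} {F : Type} [Field F]
  {K : Fin ℓ → Type} [∀ i, Field (K i)] [∀ i, Algebra (K i) F]

/-- The standard bilinear form on `F^n`. -/
noncomputable def SRBF : LinearMap.BilinForm F (SRAmb ℓ nv F) :=
  LinearMap.mk₂ F (fun x y => ∑ i, ∑ t, x i t * y i t)
    (by intro a b c; simp [add_mul, Finset.sum_add_distrib])
    (by intro a b c; simp [Finset.mul_sum, mul_assoc])
    (by intro a b c; simp [mul_add, Finset.sum_add_distrib])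
    (by intro a b c; simp [Finset.mul_sum]; congr 1; ext i; congr 1; ext t; ring)

lemma SRBF_apply (x y : SRAmb ℓ nv F) : SRBF x y = ∑ i, ∑ t, x i t * y i t := rfl

lemma SRBF_symm (x y : SRAmb ℓ nv F) : SRBF x y = SRBF y x := by
  simp only [SRBF_apply, mul_comm]

lemma SRBF_isRefl : (SRBF (ℓ := ℓ) (nv := nv) (F := F)).IsRefl := by
  intro x y h; rwa [SRBF_symm] at h

lemma SRBF_nondegenerate : (SRBF (ℓ := ℓ) (nv := nv) (F := F)).Nondegenerate := by
  refine (LinearMap.IsRefl.nondegenerate_iff_separatingLeft (B := (SRBF (ℓ := ℓ) (nv := nv) (F := F) : SRAmb ℓ nv F →ₗ[F] SRAmb ℓ nv F →ₗ[F] F)) (fun x y h => by rwa [SRBF_symm] at h)).mpr ?_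
  intro x hx
  funext i t
  have := hx (Pi.single i (Pi.single t 1))
  rw [SRBF_apply] at this
  rw [Finset.sum_eq_single i (fun b _ hb => by simp [Pi.single_eq_of_ne hb])
    (by simp)] at this
  simpa [Pi.single_eq_same, Pi.single_apply, mul_ite, Finset.sum_ite_eq'] using this

lemma SRdual_eq_orthogonal (W : Submodule F (SRAmb ℓ nv F)) :
    SRdual W = SRBF.orthogonal W := by
  ext x
  constructor
  · intro hx w hw
    rw [SRBF_symm, SRBF_apply]
    exact hx w hw
  · intro hx c hc
    have := hx c hc
    rw [SRBF_symm, SRBF_apply] at this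
    exact this

lemma finrank_SRdual (W : Submodule F (SRAmb ℓ nv F)) :
    finrank F (SRdual W) + finrank F W = finrank F (SRAmb ℓ nv F) := by
  rw [SRdual_eq_orthogonal]
  have := LinearMap.BilinForm.finrank_add_finrank_orthogonal
    (B := SRBF (ℓ := ℓ) (nv := nv) (F := F)) SRBF_isRefl W
  rw [LinearMap.BilinForm.orthogonal_top_eq_bot SRBF_nondegenerate, inf_bot_eq,
    finrank_bot, add_zero] at this
  omega

lemma SRdual_sup (A B : Submodule F (SRAmb ℓ nv F)) :
    SRdual (A ⊔ B) = SRdual A ⊓ SRdual B := by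
  simp only [SRdual_eq_orthogonal]
  ext x
  simp only [Submodule.mem_inf, LinearMap.BilinForm.mem_orthogonal_iff]
  constructor
  · intro h
    exact ⟨fun n hn => h n (Submodule.mem_sup_left hn),
      fun n hn => h n (Submodule.mem_sup_right hn)⟩
  · rintro ⟨h1, h2⟩ n hn
    obtain ⟨a, ha, b, hb, rfl⟩ := Submodule.mem_sup.mp hn
    have : SRBF (a + b) x = SRBF a x + SRBF b x := by
      rw [map_add, LinearMap.add_apply]
    rw [this, h1 a ha, h2 b hb, add_zero]


section Aux2
open Module LinearMap

variable {ℓ : ℕ} {nv : Fin ℓ → ℕ} {F : Type} [Field F]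
  {K : Fin ℓ → Type} [∀ i, Field (K i)] [∀ i, Algebra (K i) F]

/-- The `K i`-linear map `w ↦ ∑ t, w t • x i t`. -/
noncomputable def SRS (x : SRAmb ℓ nv F) (i : Fin ℓ) : (Fin (nv i) → K i) →ₗ[K i] F where
  toFun w := ∑ t, w t • x i t
  map_add' a b := by simp [add_smul, Finset.sum_add_distrib]
  map_smul' c a := by simp [mul_smul, Finset.smul_sum]

lemma SRS_apply (x : SRAmb ℓ nv F) (i : Fin ℓ) (w : Fin (nv i) → K i) :
    SRS x i w = ∑ t, w t • x i t := rfl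

lemma SRsupp_le_orth_iff (x : SRAmb ℓ nv F) (i : Fin ℓ) (W : Submodule (K i) (Fin (nv i) → K i)) :
    SRsupp (K := K) x i ≤ SRorth W ↔ ∀ w ∈ W, SRS x i w = 0 := by
  rw [SRsupp, Submodule.span_le]
  constructor
  · intro h w hw
    have : ∀ f : F →ₗ[K i] K i, f (SRS x i w) = 0 := by
      intro f
      have hf : f (SRS x i w) = ∑ t, (fun t => f (x i t)) t * w t := by
        rw [SRS_apply, map_sum]
        congr 1; ext t
        rw [map_smul, smul_eq_mul, mul_comm]
      rw [hf]
      exact h ⟨f, rfl⟩ w hw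
    exact (Module.forall_dual_apply_eq_zero_iff (K i) _).mp this
  · rintro h v ⟨f, rfl⟩ w hw
    have hf : ∑ t, f (x i t) * w t = f (SRS x i w) := by
      rw [SRS_apply, map_sum]
      congr 1; ext t
      rw [map_smul, smul_eq_mul, mul_comm]
    show ∑ t, f (x i t) * w t = 0
    rw [hf, h w hw, map_zero]

lemma forall_mem_iff_basis [∀ i, FiniteDimensional (K i) F] {i : Fin ℓ}
    (L : Submodule (K i) (Fin (nv i) → K i)) (S : (Fin (nv i) → K i) →ₗ[K i] F) :
    (∀ w ∈ L, S w = 0) ↔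
      ∀ j, S ((Module.finBasis (K i) L j : L) : Fin (nv i) → K i) = 0 := by
  constructor
  · intro h j
    exact h _ (Submodule.coe_mem _)
  · intro h w hw
    have : S.comp L.subtype = 0 := by
      apply Basis.ext (Module.finBasis (K i) L)
      intro j
      simpa using h j
    have := LinearMap.congr_fun this ⟨w, hw⟩
    simpa using this

lemma SRpi_apply (L : SRLat ℓ nv K) (x : SRAmb ℓ nv F) (i : Fin ℓ)
    (j : Fin (finrank (K i) (L i))) :
    SRpi (F := F) L x i j =
      ∑ t, x i t * algebraMap (K i) F ((Module.finBasis (K i) (L i) j).val t) := rfl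

lemma ker_SRpi [∀ i, FiniteDimensional (K i) F] (L : SRLat ℓ nv K) :
    LinearMap.ker (SRpi (F := F) L) = SRVL (SRlatPerp L) := by
  ext x
  rw [LinearMap.mem_ker]
  have hmem : x ∈ SRVL (SRlatPerp L) ↔ ∀ i, SRsupp (K := K) x i ≤ SRorth (L i) := Iff.rfl
  rw [hmem]
  simp only [SRsupp_le_orth_iff, forall_mem_iff_basis]
  constructor
  · intro h i j
    have := congr_fun (congr_fun h i) j
    rw [SRpi_apply] at this
    simp only [Pi.zero_apply] at this
    rw [SRS_apply, ← this]
    congr 1; ext t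
    rw [Algebra.smul_def, mul_comm]
  · intro h
    funext i j
    have := h i j
    rw [SRS_apply] at this
    simp only [Pi.zero_apply]
    rw [SRpi_apply, ← this]
    congr 1; ext t
    rw [Algebra.smul_def, mul_comm]
section Aux3
variable [∀ i, FiniteDimensional (K i) F]

/-- Parametrization of `V_L` by `F`-coordinates in the bases of the `L i`. -/
noncomputable def SRPhi (L : SRLat ℓ nv K) :
    ((i : Fin ℓ) → Fin (finrank (K i) (L i)) → F) →ₗ[F] SRAmb ℓ nv F where
  toFun y := fun i t =>
    ∑ j, algebraMap (K i) F ((Module.finBasis (K i) (L i) j).val t) * y i j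
  map_add' a b := by
    funext i t
    simp [mul_add, Finset.sum_add_distrib]
  map_smul' c a := by
    funext i t
    simp only [Pi.smul_apply, smul_eq_mul, RingHom.id_apply, Finset.mul_sum]
    congr 1; ext j; ring

lemma SRPhi_apply (L : SRLat ℓ nv K) (y : (i : Fin ℓ) → Fin (finrank (K i) (L i)) → F)
    (i : Fin ℓ) (t : Fin (nv i)) :
    SRPhi (F := F) L y i t =
      ∑ j, algebraMap (K i) F ((Module.finBasis (K i) (L i) j).val t) * y i j := rfl

lemma SRPhi_ker (L : SRLat ℓ nv K) : LinearMap.ker (SRPhi (F := F) L) = ⊥ := by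
  rw [LinearMap.ker_eq_bot']
  intro y hy
  funext i j
  have hli : LinearIndependent (K i)
      (fun j => ((Module.finBasis (K i) (L i) j : L i) : Fin (nv i) → K i)) :=
    (Module.finBasis (K i) (L i)).linearIndependent.map' (L i).subtype
      (Submodule.ker_subtype _)
  refine (Module.forall_dual_apply_eq_zero_iff (K i) (y i j)).mp ?_
  intro f
  have hz : ∀ t, ∑ j', ((Module.finBasis (K i) (L i) j' : L i) : Fin (nv i) → K i) t
      * f (y i j') = 0 := by
    intro t
    have h0 := congr_fun (congr_fun hy i) t
    rw [SRPhi_apply] at h0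
    have : f (∑ j', algebraMap (K i) F ((Module.finBasis (K i) (L i) j').val t) * y i j') =
        ∑ j', ((Module.finBasis (K i) (L i) j' : L i) : Fin (nv i) → K i) t * f (y i j') := by
      rw [map_sum]
      congr 1; ext j'
      rw [← Algebra.smul_def, map_smul, smul_eq_mul]
    rw [h0] at this
    simpa using this.symm
  have hsum : ∑ j', f (y i j') •
      ((Module.finBasis (K i) (L i) j' : L i) : Fin (nv i) → K i) = 0 := by
    funext t
    simpa [mul_comm] using hz t
  exact Fintype.linearIndependent_iff.mp hli (fun j' => f (y i j')) hsum j

lemma SRPhi_range (L : SRLat ℓ nv K) : LinearMap.range (SRPhi (F := F) L) = SRVL L := by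
  apply le_antisymm
  · rintro _ ⟨y, rfl⟩
    intro i
    apply Submodule.span_le.mpr
    rintro _ ⟨f, rfl⟩
    have : (fun t => f (SRPhi (F := F) L y i t)) =
        ∑ j, f (y i j) • ((Module.finBasis (K i) (L i) j : L i) : Fin (nv i) → K i) := by
      funext t
      rw [SRPhi_apply, map_sum, Finset.sum_apply]
      congr 1; ext j
      rw [← Algebra.smul_def, map_smul]
      simp [mul_comm]
    rw [this]
    exact Submodule.sum_mem _ fun j _ =>
      Submodule.smul_mem _ _ (Submodule.coe_mem _)
  · intro x hx
    -- build the preimage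
    classical
    have hr : ∀ i (f : F →ₗ[K i] K i), (fun t => f (x i t)) ∈ L i := fun i f =>
      hx i (Submodule.subset_span ⟨f, rfl⟩)
    refine ⟨fun i j => ∑ s, ((Module.finBasis (K i) (L i)).repr
        ⟨fun t => (Module.finBasis (K i) F).coord s (x i t), hr i _⟩ j) •
        (Module.finBasis (K i) F s), ?_⟩
    funext i t
    set e := Module.finBasis (K i) F with he
    set b := Module.finBasis (K i) (L i) with hb
    set r : Fin (finrank (K i) F) → ↥(L i) := fun s =>
      ⟨fun t => e.coord s (x i t), hr i _⟩ with hrdef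
    rw [SRPhi_apply]
    have step1 : ∀ j, algebraMap (K i) F ((b j).val t) *
        ∑ s, (b.repr (r s) j) • e s = ∑ s, ((b.repr (r s) j) * (b j).val t) • e s := by
      intro j
      rw [Finset.mul_sum]
      congr 1; ext s
      rw [← Algebra.smul_def, smul_smul, mul_comm]
    have step2 : ∑ j, algebraMap (K i) F ((b j).val t) * ∑ s, (b.repr (r s) j) • e s
        = ∑ s, (∑ j, (b.repr (r s) j) * (b j).val t) • e s := by
      rw [Finset.sum_congr rfl fun j _ => step1 j, Finset.sum_comm]
      congr 1; ext s
      rw [Finset.sum_smul]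
    have step3 : ∀ s, (∑ j, (b.repr (r s) j) * (b j).val t) = (r s).val t := by
      intro s
      have := b.sum_repr (r s)
      have hcoe := congr_fun (congr_arg Subtype.val this) t
      rw [← hcoe]
      have : ((∑ j, b.repr (r s) j • b j : ↥(L i)) : Fin (nv i) → K i) t
          = ∑ j, (b.repr (r s) j • b j : ↥(L i)).val t := by
        rw [show ((∑ j, b.repr (r s) j • b j : ↥(L i)) : Fin (nv i) → K i)
            = ∑ j, ((b.repr (r s) j • b j : ↥(L i)) : Fin (nv i) → K i) from
          Submodule.coe_sum _ _ _]
        rw [Finset.sum_apply]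
      rw [this]
      rfl
    rw [step2, Finset.sum_congr rfl fun s _ => by rw [step3]]
    have : ∀ s, ((r s).val t) • e s = (e.repr (x i t) s) • e s := by
      intro s; rfl
    rw [Finset.sum_congr rfl fun s _ => this s]
    exact e.sum_repr (x i t)

lemma finrank_SRVL (L : SRLat ℓ nv K) : finrank F (SRVL (F := F) L) = SRrk L := by
  have h := LinearMap.finrank_range_add_finrank_ker (SRPhi (F := F) L)
  rw [SRPhi_ker, finrank_bot, add_zero, SRPhi_range] at h
  rw [h, SRrk]
  rw [Module.finrank_pi_fintype F]
  congr 1; ext i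
  simp [Module.finrank_pi]

end Aux3
end Aux2
end Aux

section Final
open Module LinearMap
variable {ℓ : ℕ} {nv : Fin ℓ → ℕ} {F : Type} [Field F]
  {K : Fin ℓ → Type} [∀ i, Field (K i)] [∀ i, Algebra (K i) F]
  [∀ i, FiniteDimensional (K i) F]

lemma SRpi_adjoint (L : SRLat ℓ nv K) (x : SRAmb ℓ nv F)
    (y : (i : Fin ℓ) → Fin (finrank (K i) (L i)) → F) :
    SRBF x (SRPhi (F := F) L y) = ∑ i, ∑ j, SRpi (F := F) L x i j * y i j := by
  rw [SRBF_apply]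
  congr 1; ext i
  simp only [SRPhi_apply, SRpi_apply, Finset.mul_sum, Finset.sum_mul]
  rw [Finset.sum_comm]
  congr 1; ext j
  congr 1; ext t
  ring

lemma SRdual_SRVL_eq_ker (L : SRLat ℓ nv K) :
    SRdual (SRVL (F := F) L) = LinearMap.ker (SRpi (F := F) L) := by
  ext x
  constructor
  · intro hx
    rw [LinearMap.mem_ker]
    funext i j
    have hc : SRPhi (F := F) L (Pi.single i (Pi.single j 1)) ∈ SRVL (F := F) L := by
      rw [← SRPhi_range (F := F) L]
      exact ⟨_, rfl⟩
    have h0 := hx _ hc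
    have := SRpi_adjoint (F := F) L x (Pi.single i (Pi.single j 1))
    rw [SRBF_apply] at this
    rw [this] at h0
    rw [Finset.sum_eq_single i (fun b _ hb => by simp [Pi.single_eq_of_ne hb])
      (by simp)] at h0
    simpa [Pi.single_eq_same, Pi.single_apply, mul_ite, Finset.sum_ite_eq'] using h0
  · intro hx c hc
    rw [← SRPhi_range (F := F) L] at hc
    obtain ⟨y, rfl⟩ := hc
    have := SRpi_adjoint (F := F) L x y
    rw [SRBF_apply] at this
    rw [LinearMap.mem_ker] at hx
    rw [this, hx]
    simp

/-- Key identity: `ρ_C(L) + dim_F (C ∩ V_L) = Rk L`. -/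
lemma SRrho_add_finrank (C : Submodule F (SRAmb ℓ nv F)) (L : SRLat ℓ nv K) :
    SRrho (F := F) C L + finrank F ↥(C ⊓ SRVL (F := F) L) = SRrk L := by
  set n := finrank F (SRAmb ℓ nv F) with hn
  have e1 : finrank F (SRdual C) + finrank F C = n := finrank_SRdual C
  have e2 : SRrho (F := F) C L +
      finrank F ↥(SRdual C ⊓ LinearMap.ker (SRpi (F := F) L)) = finrank F (SRdual C) := by
    have h := LinearMap.finrank_range_add_finrank_ker ((SRpi (F := F) L).domRestrict (SRdual C))
    rw [LinearMap.range_domRestrict, LinearMap.ker_domRestrict] at h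
    have hker : finrank F ((LinearMap.ker (SRpi (F := F) L)).comap (SRdual C).subtype)
        = finrank F ↥(SRdual C ⊓ LinearMap.ker (SRpi (F := F) L)) := by
      rw [← Submodule.finrank_map_subtype_eq (SRdual C), Submodule.map_comap_subtype]
    rw [hker] at h
    exact h
  have e3 : SRdual C ⊓ LinearMap.ker (SRpi (F := F) L)
      = SRdual (C ⊔ SRVL (F := F) L) := by
    rw [SRdual_sup, SRdual_SRVL_eq_ker]
  have e4 : finrank F (SRdual (C ⊔ SRVL (F := F) L))
      + finrank F ↥(C ⊔ SRVL (F := F) L) = n := finrank_SRdual _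
  have e5 : finrank F ↥(C ⊔ SRVL (F := F) L) + finrank F ↥(C ⊓ SRVL (F := F) L)
      = finrank F C + finrank F (SRVL (F := F) L) :=
    Submodule.finrank_sup_add_finrank_inf_eq _ _
  have e6 : finrank F (SRVL (F := F) L) = SRrk L := finrank_SRVL L
  rw [e3] at e2
  omega

lemma SRVL_mono {L L' : SRLat ℓ nv K} (h : L ≤ L') :
    SRVL (F := F) L ≤ SRVL (F := F) L' :=
  fun _ hc i => le_trans (hc i) (h i)

lemma SRVL_top : SRVL (F := F) (⊤ : SRLat ℓ nv K) = ⊤ :=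
  eq_top_iff.mpr fun c _ i => le_top

lemma SR_step (C : Submodule F (SRAmb ℓ nv F)) {L L' : SRLat ℓ nv K} (h : L' ≤ L) :
    finrank F ↥(C ⊓ SRVL (F := F) L) + SRrk L'
      ≤ finrank F ↥(C ⊓ SRVL (F := F) L') + SRrk L := by
  have key := Submodule.finrank_sup_add_finrank_inf_eq
    (C ⊓ SRVL (F := F) L) (SRVL (F := F) L')
  have h1 : (C ⊓ SRVL (F := F) L) ⊓ SRVL (F := F) L' = C ⊓ SRVL (F := F) L' := by
    rw [inf_assoc, inf_eq_right.mpr (SRVL_mono h)]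
  have h2 : (C ⊓ SRVL (F := F) L) ⊔ SRVL (F := F) L' ≤ SRVL (F := F) L :=
    sup_le (le_trans inf_le_right le_rfl) (SRVL_mono h)
  have h3 : finrank F ↥((C ⊓ SRVL (F := F) L) ⊔ SRVL (F := F) L')
      ≤ finrank F (SRVL (F := F) L) := Submodule.finrank_mono h2
  rw [h1, finrank_SRVL] at key
  rw [← finrank_SRVL (F := F) L]
  omega

lemma SR_hyperplane {L : SRLat ℓ nv K} (h : 0 < SRrk L) :
    ∃ L' : SRLat ℓ nv K, L' ≤ L ∧ SRrk L' + 1 = SRrk L := by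
  classical
  have : ∃ j, 0 < finrank (K j) (L j) := by
    by_contra hc
    push_neg at hc
    have : SRrk L = 0 := Finset.sum_eq_zero fun j _ => Nat.le_zero.mp (hc j)
    omega
  obtain ⟨j, hj⟩ := this
  set c := finrank (K j) (L j) with hc
  set b := Module.finBasis (K j) (L j) with hb
  have hle1 : c - 1 ≤ c := Nat.sub_le _ _
  set N0 : Submodule (K j) ↥(L j) := Submodule.span (K j)
    (Set.range (⇑b ∘ Fin.castLE hle1)) with hN0
  have hN0rk : finrank (K j) N0 = c - 1 := by
    rw [hN0, finrank_span_eq_card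
      (b.linearIndependent.comp _ (Fin.castLE_injective _))]
    simp
  set N : Submodule (K j) (Fin (nv j) → K j) := N0.map (L j).subtype with hN
  have hNrk : finrank (K j) N = c - 1 := by
    rw [hN, Submodule.finrank_map_subtype_eq]
    exact hN0rk
  have hNle : N ≤ L j := Submodule.map_subtype_le _ _
  refine ⟨Function.update L j N, ?_, ?_⟩
  · intro i
    rcases eq_or_ne i j with rfl | hij
    · rw [Function.update_self]
      exact hNle
    · rw [Function.update_of_ne hij]
  · have hrk : ∀ (M : SRLat ℓ nv K), SRrk M = ∑ i, finrank (K i) (M i) := fun _ => rfl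
    rw [hrk, hrk]
    rw [← Finset.add_sum_erase _ _ (Finset.mem_univ j),
      ← Finset.add_sum_erase _ (fun i => finrank (K i) (L i)) (Finset.mem_univ j)]
    have htail : ∑ i ∈ Finset.univ.erase j, finrank (K i) ↥(Function.update L j N i)
        = ∑ i ∈ Finset.univ.erase j, finrank (K i) (L i) := by
      apply Finset.sum_congr rfl
      intro i hi
      rw [Function.update_of_ne (Finset.ne_of_mem_erase hi)]
    rw [htail, Function.update_self, hNrk]
    omega

lemma SR_descent (C : Submodule F (SRAmb ℓ nv F)) :
    ∀ (m : ℕ) (L : SRLat ℓ nv K), SRrk L ≤ m →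
      ∀ i, i ≤ finrank F ↥(C ⊓ SRVL (F := F) L) →
        ∃ L' : SRLat ℓ nv K, SRrk L' ≤ SRrk L ∧
          finrank F ↥(C ⊓ SRVL (F := F) L') = i := by
  intro m
  induction m with
  | zero =>
    intro L hL i hi
    have hg : finrank F ↥(C ⊓ SRVL (F := F) L) ≤ SRrk L := by
      rw [← finrank_SRVL (F := F) L]
      exact Submodule.finrank_mono inf_le_right
    exact ⟨L, le_rfl, by omega⟩
  | succ m ih =>
    intro L hL i hi
    rcases eq_or_lt_of_le hi with heq | hlt
    · exact ⟨L, le_rfl, heq.symm⟩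
    · have hg : finrank F ↥(C ⊓ SRVL (F := F) L) ≤ SRrk L := by
        rw [← finrank_SRVL (F := F) L]
        exact Submodule.finrank_mono inf_le_right
      have hpos : 0 < SRrk L := by omega
      obtain ⟨L'', hle, hrk⟩ := SR_hyperplane (L := L) hpos
      have hstep := SR_step (F := F) C hle
      obtain ⟨L', h1, h2⟩ := ih L'' (by omega) i (by omega)
      exact ⟨L', by omega, h2⟩
end Final


/-- For an `[n,k]` sum-rank metric code `C` with associated
sum-matroid `M_C = (K^n, ρ_C)`, the generalized weights agree:
`d_i(M_C) = d_{SR,i}(C)` for `i = 1, …, k`. -/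
theorem stmt11_gw_matroid_eq_gw_code
    {ℓ : ℕ} (hℓ : 0 < ℓ) {nv : Fin ℓ → ℕ} (hnv : ∀ i, 0 < nv i)
    {F : Type} [Field F] [Finite F]
    {K : Fin ℓ → Type} [∀ i, Field (K i)] [∀ i, Finite (K i)]
    [∀ i, Algebra (K i) F] [∀ i, FiniteDimensional (K i) F]
    (C : Submodule F (SRAmb ℓ nv F)) (k : ℕ) (hk : Module.finrank F C = k)
    (i : ℕ) (hi1 : 1 ≤ i) (hi2 : i ≤ k) :
    SRgw (fun L : SRLat ℓ nv K => SRrho C L) i = SRdgw K C i := by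
  -- the nullity equals the dimension of `C ∩ V_L`
  have heta : ∀ L : SRLat ℓ nv K, SReta (fun L => SRrho C L) L
      = finrank F ↥(C ⊓ SRVL (F := F) L) := by
    intro L
    have := SRrho_add_finrank (F := F) C L
    have h2 : SReta (fun L => SRrho C L) L = SRrk L - SRrho (F := F) C L := rfl
    rw [h2]
    omega
  set S1 : Set ℕ := {w | ∃ L : SRLat ℓ nv K,
    SReta (fun L => SRrho C L) L = i ∧ SRrk L = w} with hS1
  set S2 : Set ℕ := {w | ∃ L : SRLat ℓ nv K,
    i ≤ finrank F ↥(C ⊓ SRVL (F := F) L) ∧ SRrk L = w} with hS2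
  have hgw : SRgw (fun L : SRLat ℓ nv K => SRrho C L) i = sInf S1 := rfl
  have hdgw : SRdgw K C i = sInf S2 := rfl
  rw [hgw, hdgw]
  -- S2 is nonempty
  have htop : i ≤ finrank F ↥(C ⊓ SRVL (F := F) (⊤ : SRLat ℓ nv K)) := by
    rw [SRVL_top, inf_top_eq, hk]
    exact hi2
  have hne2 : S2.Nonempty := ⟨SRrk (⊤ : SRLat ℓ nv K), ⊤, htop, rfl⟩
  -- from any element of S2 we get a smaller-or-equal element of S1
  have hdesc : ∀ w ∈ S2, ∃ w' ∈ S1, w' ≤ w := by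
    rintro w ⟨L, hle, rfl⟩
    obtain ⟨L', h1, h2⟩ := SR_descent (F := F) C (SRrk L) L le_rfl i hle
    exact ⟨SRrk L', ⟨L', by rw [heta]; exact h2, rfl⟩, h1⟩
  -- S1 ⊆ S2
  have h12 : S1 ⊆ S2 := by
    rintro w ⟨L, hL, rfl⟩
    rw [heta] at hL
    exact ⟨L, le_of_eq hL.symm, rfl⟩
  obtain ⟨w', hw'1, hw'2⟩ := hdesc (sInf S2) (Nat.sInf_mem hne2)
  have hne1 : S1.Nonempty := ⟨w', hw'1⟩
  apply le_antisymm
  · exact le_trans (Nat.sInf_le hw'1) hw'2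
  · exact Nat.sInf_le (h12 (Nat.sInf_mem hne1))
end

section
/- (Wei-type duality for sum-matroids.) Let M = (K^n, ρ) be a sum-matroid of rank k (i.e., ρ(K^n) = k) and let M* = (K^n, ρ*) be its dual, where n = n_1+⋯+n_ℓ. Let d_i = d_i(M) for i = 1,…,n−k and d_j^⊥ = d_j(M*) for j = 1,…,k. Then {1, 2, …, n} = {d_1^⊥, …, d_k^⊥} ∪ {n+1−d_1, …, n+1−d_{n−k}}, and this union is disjoint. -/
open Module

variable {ℓ : ℕ} {nv : Fin ℓ → ℕ} {F : Type} [Field F]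
  {K : Fin ℓ → Type} [∀ i, Field (K i)] [∀ i, Algebra (K i) F]

/-! ### Auxiliary lemmas for Wei duality -/

section WeiAux

variable {ℓ : ℕ} {nv : Fin ℓ → ℕ} {K : Fin ℓ → Type} [∀ i, Field (K i)]

/-- The standard dot-product bilinear form on `Fin m → k`. -/
noncomputable def SRdotForm (k : Type) [Field k] (m : ℕ) :
    LinearMap.BilinForm k (Fin m → k) :=
  LinearMap.mk₂ k (fun v w => ∑ t, v t * w t)
    (by intro a b w; simp [add_mul, Finset.sum_add_distrib])
    (by intro c a w; simp [Finset.mul_sum, mul_assoc])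
    (by intro a b w; simp [mul_add, Finset.sum_add_distrib])
    (by intro c a w; simp [Finset.mul_sum]; congr 1; funext t; ring)

lemma SRdotForm_symm {k : Type} [Field k] {m : ℕ} : (SRdotForm k m).IsSymm := by
  rw [LinearMap.BilinForm.isSymm_def]
  intro v w; simp [SRdotForm, mul_comm]

lemma SRdotForm_nondeg {k : Type} [Field k] {m : ℕ} : (SRdotForm k m).Nondegenerate := by
  refine ⟨fun v hv => ?_, fun v hv => ?_⟩
  · funext t
    have := hv (Pi.single t 1)
    simpa [SRdotForm, Pi.single_apply, Finset.sum_ite_eq'] using this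
  · funext t
    have := hv (Pi.single t 1)
    simpa [SRdotForm, Pi.single_apply, Finset.sum_ite_eq, Finset.sum_ite_eq'] using this

lemma SRorth_eq {k : Type} [Field k] {m : ℕ} (W : Submodule k (Fin m → k)) :
    SRorth W = (SRdotForm k m).orthogonal W := by
  ext v
  constructor
  · intro hv w hw
    simpa [LinearMap.BilinForm.IsOrtho, SRdotForm, mul_comm] using hv w hw
  · intro hv w hw
    simpa [LinearMap.BilinForm.IsOrtho, SRdotForm, mul_comm] using hv w hw

lemma SRorth_finrank {k : Type} [Field k] {m : ℕ} (W : Submodule k (Fin m → k)) :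
    finrank k (SRorth W) = m - finrank k W := by
  rw [SRorth_eq, LinearMap.BilinForm.finrank_orthogonal SRdotForm_nondeg, Module.finrank_fin_fun]

lemma SRorth_orth {k : Type} [Field k] {m : ℕ} (W : Submodule k (Fin m → k)) :
    SRorth (SRorth W) = W := by
  rw [SRorth_eq, SRorth_eq,
    LinearMap.BilinForm.orthogonal_orthogonal SRdotForm_nondeg SRdotForm_symm.isRefl]

lemma SRrk_mono {L L' : SRLat ℓ nv K} (h : L ≤ L') : SRrk L ≤ SRrk L' :=
  Finset.sum_le_sum fun i _ => Submodule.finrank_mono (h i)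

lemma SRrk_top : SRrk (⊤ : SRLat ℓ nv K) = ∑ i, nv i := by
  unfold SRrk
  refine Finset.sum_congr rfl fun i _ => ?_
  have h : (⊤ : SRLat ℓ nv K) i = ⊤ := rfl
  rw [h, finrank_top, Module.finrank_fin_fun]

lemma SRrk_bot : SRrk (⊥ : SRLat ℓ nv K) = 0 := by
  unfold SRrk
  refine Finset.sum_eq_zero fun i _ => ?_
  have h : (⊥ : SRLat ℓ nv K) i = ⊥ := rfl
  rw [h, finrank_bot]

lemma SRrk_le (L : SRLat ℓ nv K) : SRrk L ≤ ∑ i, nv i := by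
  rw [← SRrk_top (ℓ := ℓ) (nv := nv) (K := K)]
  exact SRrk_mono le_top

lemma SRrk_add_perp (L : SRLat ℓ nv K) : SRrk L + SRrk (SRlatPerp L) = ∑ i, nv i := by
  unfold SRrk SRlatPerp
  rw [← Finset.sum_add_distrib]
  refine Finset.sum_congr rfl fun i _ => ?_
  rw [SRorth_finrank]
  have : finrank (K i) (L i) ≤ nv i := by
    have := Submodule.finrank_le (L i)
    rwa [Module.finrank_fin_fun] at this
  omega

lemma SRperp_perp (L : SRLat ℓ nv K) : SRlatPerp (SRlatPerp L) = L :=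
  funext fun i => SRorth_orth (L i)

lemma SRlat_eq_of_le_of_rk_le {L L' : SRLat ℓ nv K} (h : L ≤ L')
    (hr : SRrk L' ≤ SRrk L) : L = L' := by
  have hsum : SRrk L = SRrk L' := le_antisymm (SRrk_mono h) hr
  unfold SRrk at hsum
  have heq := (Finset.sum_eq_sum_iff_of_le
    (fun i _ => Submodule.finrank_mono (h i))).mp hsum
  funext i
  exact Submodule.eq_of_le_of_finrank_le (h i)
    (le_of_eq (heq i (Finset.mem_univ i)).symm)

/-- Cover lemma: between `L < L'` there is `M = L ⊔ A` with `Rk M = Rk L + 1`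
and `Rk A ≤ 1`. -/
lemma SRcover {L L' : SRLat ℓ nv K} (h : L < L') :
    ∃ M A : SRLat ℓ nv K, L ≤ M ∧ M ≤ L' ∧ SRrk M = SRrk L + 1 ∧
      M = L ⊔ A ∧ SRrk A ≤ 1 := by
  obtain ⟨hle, hne⟩ := lt_iff_le_and_ne.mp h
  have hex : ∃ i, L i ≠ L' i := by
    by_contra hc; push_neg at hc; exact hne (funext hc)
  obtain ⟨i, hi⟩ := hex
  obtain ⟨x, hxL', hxL⟩ := Set.exists_of_ssubset
    (lt_of_le_of_ne (hle i) hi : L i < L' i)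
  have hx0 : x ≠ 0 := fun h0 => hxL (h0 ▸ (L i).zero_mem)
  set A : SRLat ℓ nv K := Function.update (⊥ : SRLat ℓ nv K) i (Submodule.span (K i) {x})
    with hA
  have hAj : ∀ j, j ≠ i → A j = ⊥ := fun j hj => by
    rw [hA]; exact Function.update_of_ne hj _ _
  have hAi : A i = Submodule.span (K i) {x} := by
    rw [hA]; exact Function.update_self _ _ _
  have hsup : ∀ j, (L ⊔ A) j = L j ⊔ A j := fun j => rfl
  have hMj : ∀ j, j ≠ i → (L ⊔ A) j = L j := fun j hj => by
    rw [hsup, hAj j hj, sup_bot_eq]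
  have hMi : (L ⊔ A) i = L i ⊔ Submodule.span (K i) {x} := by rw [hsup, hAi]
  refine ⟨L ⊔ A, A, le_sup_left, ?_, ?_, rfl, ?_⟩
  · -- L ⊔ A ≤ L'
    refine sup_le hle fun j => ?_
    by_cases hj : j = i
    · subst hj
      rw [hAi]
      exact Submodule.span_le.mpr (Set.singleton_subset_iff.mpr hxL')
    · rw [hAj j hj]
      exact bot_le
  · -- SRrk (L ⊔ A) = SRrk L + 1
    have hrki : finrank (K i) ((L ⊔ A) i) = finrank (K i) (L i) + 1 := by
      rw [hMi]
      have hdis : Disjoint (L i) (Submodule.span (K i) {x}) :=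
        (Submodule.disjoint_span_singleton' hx0).mpr hxL
      have hfr := Submodule.finrank_sup_add_finrank_inf_eq (L i) (Submodule.span (K i) {x})
      rw [hdis.eq_bot, finrank_bot, add_zero, finrank_span_singleton hx0] at hfr
      exact hfr
    unfold SRrk
    rw [← Finset.sum_erase_add _ _ (Finset.mem_univ i),
        ← Finset.sum_erase_add _ (fun j => finrank (K j) (L j)) (Finset.mem_univ i),
        hrki, Finset.sum_congr rfl fun j hj =>
          by rw [hMj j (Finset.ne_of_mem_erase hj)]]
    omega
  · -- SRrk A ≤ 1
    unfold SRrk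
    rw [← Finset.sum_erase_add _ _ (Finset.mem_univ i)]
    have h1 : ∑ j ∈ Finset.univ.erase i, finrank (K j) (A j) = 0 := by
      refine Finset.sum_eq_zero fun j hj => ?_
      rw [hAj j (Finset.ne_of_mem_erase hj), finrank_bot]
    have h2 : finrank (K i) (A i) ≤ 1 := by
      rw [hAi, finrank_span_singleton hx0]
    omega


variable {ρ : SRLat ℓ nv K → ℕ}

lemma SRrho_unit (hρ : IsSumMatroid ρ) :
    ∀ d (L L' : SRLat ℓ nv K), L ≤ L' → SRrk L' - SRrk L ≤ d → ρ L' ≤ ρ L + d := by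
  intro d
  induction d with
  | zero =>
    intro L L' h hd
    have hm := SRrk_mono h
    have hLL : L = L' := SRlat_eq_of_le_of_rk_le h (by omega)
    rw [hLL]
    exact Nat.le_add_right _ _
  | succ d ih =>
    intro L L' h hd
    by_cases he : L = L'
    · rw [he]; exact Nat.le_add_right _ _
    · have hlt : L < L' := lt_of_le_of_ne h he
      obtain ⟨M, A, hLM, hML', hrkM, hMeq, hrkA⟩ := SRcover hlt
      have h3 := hρ.2.2 L A
      have hA1 : ρ A ≤ 1 := le_trans (hρ.1 A) hrkA
      have hMle : ρ M ≤ ρ L + 1 := by rw [hMeq]; omega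
      have hih := ih M L' hML' (by omega)
      omega

lemma SRrho_bot (hρ : IsSumMatroid ρ) : ρ (⊥ : SRLat ℓ nv K) = 0 := by
  have := hρ.1 (⊥ : SRLat ℓ nv K)
  rw [SRrk_bot] at this
  omega

lemma SRexists_between (hLL : (L : SRLat ℓ nv K) ≤ L') :
    ∀ m, SRrk L ≤ m → m ≤ SRrk L' → ∃ M, L ≤ M ∧ M ≤ L' ∧ SRrk M = m := by
  intro m
  induction m with
  | zero =>
    intro h1 h2
    exact ⟨L, le_rfl, hLL, by omega⟩
  | succ m ih =>
    intro h1 h2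
    rcases Nat.lt_or_ge (SRrk L) (m + 1) with hlt | hge
    · have hm : SRrk L ≤ m := by omega
      obtain ⟨M, hLM, hML', hMrk⟩ := ih hm (by omega)
      have hMne : M ≠ L' := fun he => by rw [he] at hMrk; omega
      obtain ⟨M', _, hMM', hM'L', hM'rk, _, _⟩ := SRcover (lt_of_le_of_ne hML' hMne)
      exact ⟨M', le_trans hLM hMM', hM'L', by omega⟩
    · exact ⟨L, le_rfl, hLL, by omega⟩

lemma SRexists_rk (m : ℕ) (hm : m ≤ ∑ i, nv i) : ∃ M : SRLat ℓ nv K, SRrk M = m := by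
  obtain ⟨M, _, _, hMrk⟩ := SRexists_between (bot_le : (⊥ : SRLat ℓ nv K) ≤ ⊤) m
    (by rw [SRrk_bot]; omega) (by rw [SRrk_top]; omega)
  exact ⟨M, hMrk⟩

/-- `g(m)`: the minimum of `ρ` over lattice elements of rank `m`. -/
noncomputable def SRg (ρ : SRLat ℓ nv K → ℕ) (m : ℕ) : ℕ :=
  sInf {s | ∃ L : SRLat ℓ nv K, SRrk L = m ∧ ρ L = s}

lemma SRg_achieved {m : ℕ} (hm : m ≤ ∑ i, nv i) :
    ∃ L : SRLat ℓ nv K, SRrk L = m ∧ ρ L = SRg ρ m := by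
  have hne : {s | ∃ L : SRLat ℓ nv K, SRrk L = m ∧ ρ L = s}.Nonempty := by
    obtain ⟨M, hM⟩ := SRexists_rk (K := K) m hm
    exact ⟨ρ M, M, hM, rfl⟩
  exact Nat.sInf_mem hne

lemma SRg_le (L : SRLat ℓ nv K) : SRg ρ (SRrk L) ≤ ρ L :=
  Nat.sInf_le ⟨L, rfl, rfl⟩

lemma SRg_zero (hρ : IsSumMatroid ρ) : SRg ρ 0 = 0 := by
  have h1 : SRg ρ (SRrk (⊥ : SRLat ℓ nv K)) ≤ ρ ⊥ := SRg_le ⊥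
  rw [SRrk_bot, SRrho_bot hρ] at h1
  omega

lemma SRg_mono (hρ : IsSumMatroid ρ) {m m' : ℕ} (h : m ≤ m') (h' : m' ≤ ∑ i, nv i) :
    SRg ρ m ≤ SRg ρ m' := by
  obtain ⟨L', hL'rk, hL'⟩ := SRg_achieved (ρ := ρ) h'
  obtain ⟨M, _, hML', hMrk⟩ := SRexists_between (bot_le : (⊥ : SRLat ℓ nv K) ≤ L') m
    (by rw [SRrk_bot]; omega) (by omega)
  calc SRg ρ m = SRg ρ (SRrk M) := by rw [hMrk]
    _ ≤ ρ M := SRg_le M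
    _ ≤ ρ L' := hρ.2.1 M L' hML'
    _ = SRg ρ m' := hL'

lemma SRg_add (hρ : IsSumMatroid ρ) {m m' : ℕ} (h : m ≤ m') (h' : m' ≤ ∑ i, nv i) :
    SRg ρ m' ≤ SRg ρ m + (m' - m) := by
  obtain ⟨L, hLrk, hL⟩ := SRg_achieved (ρ := ρ) (le_trans h h')
  obtain ⟨M, hLM, _, hMrk⟩ := SRexists_between (le_top : L ≤ ⊤) m'
    (by omega) (by rw [SRrk_top]; omega)
  have h1 : SRg ρ m' ≤ ρ M := by rw [← hMrk]; exact SRg_le M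
  have h2 : ρ M ≤ ρ L + (SRrk M - SRrk L) :=
    SRrho_unit hρ (SRrk M - SRrk L) L M hLM le_rfl
  omega

lemma SRg_le_self (hρ : IsSumMatroid ρ) {m : ℕ} (hm : m ≤ ∑ i, nv i) : SRg ρ m ≤ m := by
  obtain ⟨L, hLrk, hL⟩ := SRg_achieved (ρ := ρ) hm
  have := hρ.1 L
  omega

lemma SRg_top (hρ : IsSumMatroid ρ) : SRg ρ (∑ i, nv i) = ρ (⊤ : SRLat ℓ nv K) := by
  obtain ⟨L, hLrk, hL⟩ := SRg_achieved (ρ := ρ) le_rfl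
  have hLtop : L = ⊤ := SRlat_eq_of_le_of_rk_le le_top (by rw [SRrk_top]; omega)
  rw [← hL, hLtop]

lemma SRg_le_k (hρ : IsSumMatroid ρ) {m : ℕ} (hm : m ≤ ∑ i, nv i) :
    SRg ρ m ≤ ρ (⊤ : SRLat ℓ nv K) := by
  have := SRg_mono hρ hm le_rfl
  rwa [SRg_top hρ] at this


lemma SRf_mono (hρ : IsSumMatroid ρ) {m m' : ℕ} (h : m ≤ m') (h' : m' ≤ ∑ i, nv i) :
    m - SRg ρ m ≤ m' - SRg ρ m' := by
  have h1 := SRg_add hρ h h'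
  have h2 := SRg_le_self hρ (le_trans h h')
  omega

/-- Primal generalized weight spec: `d_i` lies in `[1,n]`, the function `g` is
flat at `d_i`, and `d_i - g(d_i) = i`. -/
lemma SRgw_primal (hρ : IsSumMatroid ρ) {i : ℕ} (hi1 : 1 ≤ i)
    (hi2 : i ≤ (∑ t, nv t) - ρ (⊤ : SRLat ℓ nv K)) :
    1 ≤ SRgw ρ i ∧ SRgw ρ i ≤ ∑ t, nv t ∧
      SRg ρ (SRgw ρ i) = SRg ρ (SRgw ρ i - 1) ∧
      SRgw ρ i - SRg ρ (SRgw ρ i) = i := by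
  have hkn : ρ (⊤ : SRLat ℓ nv K) ≤ ∑ t, nv t := by
    have := hρ.1 (⊤ : SRLat ℓ nv K); rwa [SRrk_top] at this
  set T : Set ℕ := {m | m ≤ ∑ t, nv t ∧ i ≤ m - SRg ρ m} with hT
  have hTn : (∑ t, nv t) ∈ T := by
    refine ⟨le_rfl, ?_⟩
    rw [SRg_top hρ]
    omega
  have hm₀T : sInf T ∈ T := Nat.sInf_mem ⟨_, hTn⟩
  set m₀ := sInf T with hm₀
  have hm₀n : m₀ ≤ ∑ t, nv t := hm₀T.1
  have hkey : i ≤ m₀ - SRg ρ m₀ := hm₀T.2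
  have hg0 : SRg ρ 0 = 0 := SRg_zero hρ
  have hm₀1 : 1 ≤ m₀ := by
    rcases Nat.eq_zero_or_pos m₀ with h0 | h
    · exfalso; rw [h0, hg0] at hkey; omega
    · exact h
  have hnotT : m₀ - 1 ∉ T := Nat.notMem_of_lt_sInf (by omega)
  have hnT : ¬(i ≤ (m₀ - 1) - SRg ρ (m₀ - 1)) := fun hcon => hnotT ⟨by omega, hcon⟩
  have hstep : SRg ρ m₀ ≤ SRg ρ (m₀ - 1) + 1 := by
    have := SRg_add hρ (show m₀ - 1 ≤ m₀ by omega) hm₀n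
    omega
  have hmono : SRg ρ (m₀ - 1) ≤ SRg ρ m₀ := SRg_mono hρ (by omega) hm₀n
  have hgles : SRg ρ (m₀ - 1) ≤ m₀ - 1 := SRg_le_self hρ (by omega)
  have hflat : SRg ρ m₀ = SRg ρ (m₀ - 1) := by omega
  have hexact : m₀ - SRg ρ m₀ = i := by omega
  -- witness of rank m₀
  obtain ⟨L, hLrk, hLρ⟩ := SRg_achieved (ρ := ρ) hm₀n
  have hρL : ρ L ≤ SRrk L := hρ.1 L
  have hLeta : SReta ρ L = i := by unfold SReta; omega
  have hub : SRgw ρ i ≤ m₀ := Nat.sInf_le ⟨L, hLeta, hLrk⟩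
  have hlb : ∀ w ∈ {w | ∃ L : SRLat ℓ nv K, SReta ρ L = i ∧ SRrk L = w}, m₀ ≤ w := by
    rintro w ⟨L', hη, hrk⟩
    have h1 : SRrk L' ≤ ∑ t, nv t := SRrk_le L'
    have h2 : SRg ρ (SRrk L') ≤ ρ L' := SRg_le L'
    have h3 : ρ L' ≤ SRrk L' := hρ.1 L'
    unfold SReta at hη
    subst hrk
    exact Nat.sInf_le ⟨by omega, by omega⟩
  have hSne : {w | ∃ L : SRLat ℓ nv K, SReta ρ L = i ∧ SRrk L = w}.Nonempty :=
    ⟨m₀, L, hLeta, hLrk⟩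
  have heq : SRgw ρ i = m₀ :=
    le_antisymm hub (hlb _ (Nat.sInf_mem hSne))
  rw [heq]
  exact ⟨hm₀1, hm₀n, hflat, hexact⟩

/-- Converse of the primal spec: every flat position of `g` is a generalized
weight `d_i` with `i = m - g(m)`. -/
lemma SRgw_primal_inv (hρ : IsSumMatroid ρ) {m : ℕ} (hm1 : 1 ≤ m)
    (hm2 : m ≤ ∑ t, nv t) (hflat : SRg ρ m = SRg ρ (m - 1)) :
    1 ≤ m - SRg ρ m ∧ m - SRg ρ m ≤ (∑ t, nv t) - ρ (⊤ : SRLat ℓ nv K) ∧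
      SRgw ρ (m - SRg ρ m) = m := by
  have hgles : SRg ρ (m - 1) ≤ m - 1 := SRg_le_self hρ (by omega)
  have hi1 : 1 ≤ m - SRg ρ m := by omega
  have hfm : m - SRg ρ m ≤ (∑ t, nv t) - SRg ρ (∑ t, nv t) := SRf_mono hρ hm2 le_rfl
  have hgt : SRg ρ (∑ t, nv t) = ρ (⊤ : SRLat ℓ nv K) := SRg_top hρ
  have hi2 : m - SRg ρ m ≤ (∑ t, nv t) - ρ (⊤ : SRLat ℓ nv K) := by omega
  obtain ⟨hd1, hdn, hdflat, hdex⟩ := SRgw_primal hρ hi1 hi2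
  refine ⟨hi1, hi2, ?_⟩
  set i := m - SRg ρ m with hi
  set d := SRgw ρ i with hd
  -- d ≤ m : m itself is attained by an achieved L of rank m
  obtain ⟨L, hLrk, hLρ⟩ := SRg_achieved (ρ := ρ) hm2
  have hρL : ρ L ≤ SRrk L := hρ.1 L
  have hLeta : SReta ρ L = i := by unfold SReta; omega
  have hub : d ≤ m := Nat.sInf_le ⟨L, hLeta, hLrk⟩
  -- m ≤ d : otherwise f(m-1) ≥ f(d) = i, contradiction with f(m-1) = i - 1
  rcases Nat.lt_or_ge d m with hlt | hge
  · exfalso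
    have hfd : d - SRg ρ d ≤ (m - 1) - SRg ρ (m - 1) := SRf_mono hρ (by omega) (by omega)
    omega
  · omega

/-- Dual generalized weight spec. -/
lemma SRgw_dual_spec (hρ : IsSumMatroid ρ) {j : ℕ} (hj1 : 1 ≤ j)
    (hj2 : j ≤ ρ (⊤ : SRLat ℓ nv K)) :
    ∃ mb, mb < ∑ t, nv t ∧ SRgw (SRdualRk ρ) j = (∑ t, nv t) - mb ∧
      SRg ρ mb = ρ (⊤ : SRLat ℓ nv K) - j ∧
      SRg ρ (mb + 1) = (ρ (⊤ : SRLat ℓ nv K) - j) + 1 ∧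
      (∀ m ≤ ∑ t, nv t, SRg ρ m ≤ ρ (⊤ : SRLat ℓ nv K) - j → m ≤ mb) := by
  have hkn : ρ (⊤ : SRLat ℓ nv K) ≤ ∑ t, nv t := by
    have := hρ.1 (⊤ : SRLat ℓ nv K); rwa [SRrk_top] at this
  have hgtop : SRg ρ (∑ t, nv t) = ρ (⊤ : SRLat ℓ nv K) := SRg_top hρ
  set mb := Nat.findGreatest (fun m => SRg ρ m ≤ ρ (⊤ : SRLat ℓ nv K) - j) (∑ t, nv t)
    with hmb
  have hP0 : SRg ρ 0 ≤ ρ (⊤ : SRLat ℓ nv K) - j := by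
    rw [SRg_zero hρ]; exact Nat.zero_le _
  have hmb_le : mb ≤ ∑ t, nv t := Nat.findGreatest_le _
  have hmb_spec : SRg ρ mb ≤ ρ (⊤ : SRLat ℓ nv K) - j := by
    rw [hmb]
    exact Nat.findGreatest_spec (P := fun m => SRg ρ m ≤ ρ (⊤ : SRLat ℓ nv K) - j)
      (Nat.zero_le _) hP0
  have hmax : ∀ m ≤ ∑ t, nv t, SRg ρ m ≤ ρ (⊤ : SRLat ℓ nv K) - j → m ≤ mb := by
    intro m hm hgm
    by_contra hc
    push_neg at hc
    rw [hmb] at hc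
    exact Nat.findGreatest_is_greatest (P := fun m => SRg ρ m ≤ ρ (⊤ : SRLat ℓ nv K) - j)
      hc hm hgm
  have hmb_lt : mb < ∑ t, nv t := by
    rcases lt_or_eq_of_le hmb_le with h | h
    · exact h
    · exfalso; rw [h, hgtop] at hmb_spec; omega
  have hrise : ρ (⊤ : SRLat ℓ nv K) - j < SRg ρ (mb + 1) := by
    by_contra hc
    push_neg at hc
    have := hmax (mb + 1) (by omega) hc
    omega
  have hstep : SRg ρ (mb + 1) ≤ SRg ρ mb + 1 := by
    have := SRg_add hρ (show mb ≤ mb + 1 by omega) (show mb + 1 ≤ ∑ t, nv t by omega)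
    omega
  have hgmb : SRg ρ mb = ρ (⊤ : SRLat ℓ nv K) - j := by omega
  have hgmb1 : SRg ρ (mb + 1) = (ρ (⊤ : SRLat ℓ nv K) - j) + 1 := by omega
  -- η* computations
  have hperp_le : ∀ L : SRLat ℓ nv K, ρ (SRlatPerp L) ≤ ρ (⊤ : SRLat ℓ nv K) :=
    fun L => hρ.2.1 _ ⊤ le_top
  have hperp_ge : ∀ L : SRLat ℓ nv K, ρ (⊤ : SRLat ℓ nv K) ≤ ρ (SRlatPerp L) + SRrk L := by
    intro L
    have h1 := SRrho_unit hρ (SRrk (⊤ : SRLat ℓ nv K) - SRrk (SRlatPerp L))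
      (SRlatPerp L) ⊤ le_top le_rfl
    have h2 := SRrk_add_perp L
    have h3 := SRrk_le L
    rw [SRrk_top] at h1
    omega
  have heta : ∀ L : SRLat ℓ nv K,
      SReta (SRdualRk ρ) L = ρ (⊤ : SRLat ℓ nv K) - ρ (SRlatPerp L) := by
    intro L
    have h1 := hperp_le L
    have h2 := hperp_ge L
    unfold SReta SRdualRk
    omega
  -- witness of rank n - mb
  obtain ⟨J, hJrk, hJρ⟩ := SRg_achieved (ρ := ρ) (le_of_lt hmb_lt)
  have hL₀perp : SRlatPerp (SRlatPerp J) = J := SRperp_perp J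
  have hL₀rk : SRrk (SRlatPerp J) = (∑ t, nv t) - mb := by
    have := SRrk_add_perp J; omega
  have hL₀eta : SReta (SRdualRk ρ) (SRlatPerp J) = j := by
    rw [heta, hL₀perp, hJρ, hgmb]; omega
  have hub : SRgw (SRdualRk ρ) j ≤ (∑ t, nv t) - mb :=
    Nat.sInf_le ⟨SRlatPerp J, hL₀eta, hL₀rk⟩
  have hSne : {w | ∃ L : SRLat ℓ nv K, SReta (SRdualRk ρ) L = j ∧ SRrk L = w}.Nonempty :=
    ⟨_, SRlatPerp J, hL₀eta, hL₀rk⟩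
  have hlb : ∀ w ∈ {w | ∃ L : SRLat ℓ nv K, SReta (SRdualRk ρ) L = j ∧ SRrk L = w},
      (∑ t, nv t) - mb ≤ w := by
    rintro w ⟨L, hη, hrk⟩
    rw [heta] at hη
    have h1 : ρ (SRlatPerp L) = ρ (⊤ : SRLat ℓ nv K) - j := by
      have := hperp_le L; omega
    have h2 : SRg ρ (SRrk (SRlatPerp L)) ≤ ρ (⊤ : SRLat ℓ nv K) - j :=
      le_trans (SRg_le _) (le_of_eq h1)
    have h4 := SRrk_add_perp L
    have h3 : SRrk (SRlatPerp L) ≤ mb := hmax _ (by omega) h2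
    omega
  have heqd : SRgw (SRdualRk ρ) j = (∑ t, nv t) - mb :=
    le_antisymm hub (hlb _ (Nat.sInf_mem hSne))
  exact ⟨mb, hmb_lt, heqd, hgmb, hgmb1, hmax⟩

/-- Converse of the dual spec: every rise position `p` of `g` gives a dual
generalized weight equal to `n + 1 - p`. -/
lemma SRgw_dual_inv (hρ : IsSumMatroid ρ) {p : ℕ} (hp1 : 1 ≤ p) (hp2 : p ≤ ∑ t, nv t)
    (hrise : SRg ρ p = SRg ρ (p - 1) + 1) :
    1 ≤ ρ (⊤ : SRLat ℓ nv K) - SRg ρ (p - 1) ∧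
      ρ (⊤ : SRLat ℓ nv K) - SRg ρ (p - 1) ≤ ρ (⊤ : SRLat ℓ nv K) ∧
      SRgw (SRdualRk ρ) (ρ (⊤ : SRLat ℓ nv K) - SRg ρ (p - 1)) = (∑ t, nv t) + 1 - p := by
  have hgp_le : SRg ρ p ≤ ρ (⊤ : SRLat ℓ nv K) := SRg_le_k hρ hp2
  have hs_lt : SRg ρ (p - 1) < ρ (⊤ : SRLat ℓ nv K) := by omega
  set j := ρ (⊤ : SRLat ℓ nv K) - SRg ρ (p - 1) with hj
  have hj1 : 1 ≤ j := by omega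
  have hj2 : j ≤ ρ (⊤ : SRLat ℓ nv K) := by omega
  obtain ⟨mb, hmb_lt, heqd, hgmb, hgmb1, hmax⟩ := SRgw_dual_spec hρ hj1 hj2
  have hs : ρ (⊤ : SRLat ℓ nv K) - j = SRg ρ (p - 1) := by omega
  rw [hs] at hgmb hgmb1 hmax
  -- mb = p - 1
  have hge : p - 1 ≤ mb := hmax (p - 1) (by omega) le_rfl
  have hle : mb ≤ p - 1 := by
    by_contra hc
    push_neg at hc
    have hmono : SRg ρ p ≤ SRg ρ mb := SRg_mono hρ (by omega) (by omega)
    omega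
  have : mb = p - 1 := by omega
  rw [this] at heqd
  exact ⟨hj1, hj2, by omega⟩

end WeiAux


/-- Wei-type duality for sum-matroids: For a sum-matroid `M` of
rank `k` on `P(K^n)` with dual `M*`,
`{1, …, n} = {d_1^⊥, …, d_k^⊥} ∪ {n+1−d_1, …, n+1−d_{n−k}}`
and the union is disjoint. -/
theorem stmt13_wei_duality_matroid
    {ℓ : ℕ} (hℓ : 0 < ℓ) {nv : Fin ℓ → ℕ} (hnv : ∀ i, 0 < nv i)
    {F : Type} [Field F] [Finite F]
    {K : Fin ℓ → Type} [∀ i, Field (K i)] [∀ i, Finite (K i)]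
    [∀ i, Algebra (K i) F] [∀ i, FiniteDimensional (K i) F]
    (ρ : SRLat ℓ nv K → ℕ) (hρ : IsSumMatroid ρ)
    (k : ℕ) (hk : ρ (⊤ : SRLat ℓ nv K) = k) :
    (Set.Icc 1 (∑ i, nv i) : Set ℕ) =
        (fun j => SRgw (SRdualRk ρ) j) '' Set.Icc 1 k ∪
          (fun r => (∑ i, nv i) + 1 - SRgw ρ r) '' Set.Icc 1 ((∑ i, nv i) - k) ∧
      Disjoint ((fun j => SRgw (SRdualRk ρ) j) '' Set.Icc 1 k)
        ((fun r => (∑ i, nv i) + 1 - SRgw ρ r) '' Set.Icc 1 ((∑ i, nv i) - k)) := by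
  have hkn : k ≤ ∑ i, nv i := by
    rw [← hk]
    have := hρ.1 (⊤ : SRLat ℓ nv K)
    rwa [SRrk_top] at this
  constructor
  · ext m
    simp only [Set.mem_Icc, Set.mem_union, Set.mem_image]
    constructor
    · rintro ⟨hm1, hmn⟩
      set p := (∑ i, nv i) + 1 - m with hp
      have hp1 : 1 ≤ p := by omega
      have hp2 : p ≤ ∑ i, nv i := by omega
      have hstep : SRg ρ p ≤ SRg ρ (p - 1) + 1 := by
        have := SRg_add hρ (show p - 1 ≤ p by omega) hp2
        omega
      have hmono : SRg ρ (p - 1) ≤ SRg ρ p := SRg_mono hρ (by omega) hp2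
      by_cases hcase : SRg ρ p = SRg ρ (p - 1)
      · right
        obtain ⟨hi1, hi2, hgwi⟩ := SRgw_primal_inv hρ hp1 hp2 hcase
        rw [hk] at hi2
        exact ⟨p - SRg ρ p, ⟨hi1, hi2⟩, by rw [hgwi]; omega⟩
      · left
        have hrise : SRg ρ p = SRg ρ (p - 1) + 1 := by omega
        obtain ⟨hj1, hj2, hgwj⟩ := SRgw_dual_inv hρ hp1 hp2 hrise
        rw [hk] at hj1 hj2 hgwj
        refine ⟨k - SRg ρ (p - 1), ⟨hj1, hj2⟩, ?_⟩
        rw [hgwj]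
        omega
    · rintro (⟨j, ⟨hj1, hj2⟩, rfl⟩ | ⟨r, ⟨hr1, hr2⟩, rfl⟩)
      · obtain ⟨mb, hmb_lt, heqd, _, _, _⟩ := SRgw_dual_spec hρ hj1 (hk ▸ hj2)
        rw [heqd]
        omega
      · obtain ⟨hd1, hdn, _, _⟩ := SRgw_primal hρ hr1 (by rw [hk]; exact hr2)
        omega
  · rw [Set.disjoint_left]
    rintro m hmem1 hmem2
    simp only [Set.mem_image, Set.mem_Icc] at hmem1 hmem2
    obtain ⟨j, ⟨hj1, hj2⟩, hjm⟩ := hmem1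
    obtain ⟨r, ⟨hr1, hr2⟩, hrm⟩ := hmem2
    obtain ⟨mb, hmb_lt, heqd, hgmb, hgmb1, _⟩ := SRgw_dual_spec hρ hj1 (hk ▸ hj2)
    obtain ⟨hd1, hdn, hdflat, _⟩ := SRgw_primal hρ hr1 (by rw [hk]; exact hr2)
    have hd : SRgw ρ r = mb + 1 := by omega
    rw [hd] at hdflat
    have hsub : mb + 1 - 1 = mb := by omega
    rw [hsub] at hdflat
    omega
end
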